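/- Fix d ≥ 1, N ≥ 1, and a lower-triangular real array (H_{i,j})_{0 ≤ j ≤ i ≤ N−1}. For L, R > 0 let W(L, R) ⊆ ℝ be the set of all values f_N obtained from choices of x₀ ∈ E, vectors b_k ∈ E with ‖b_k‖ ≤ 1, and reals f_k (for 0 ≤ k ≤ N) satisfying the following, where t_k := −√(1 − ‖b_k‖²) for 0 ≤ k ≤ N, x_{i+1} := x₀ − (1/L)·Σ_{j=0}^{i} H_{i,j}·b_j for 0 ≤ i ≤ N−1, and the star index is defined by x_⋆ := 0, f_⋆ := 0, b_⋆ := 0, t_⋆ := −1: (i) ‖x₀‖ ≤ R; (ii) for all k, l ∈ {0, …, N, ⋆}: ⟪b_k, x_l − (1/L)·b_l − x_k + (1/L)·b_k⟫ + t_k·(f_l − (1/L)·t_l − f_k + (1/L)·t_k) ≤ 0. Then for every η > 0, W(L, η·R) = {η·t : t ∈ W(η·L, R)}. -/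

import Mathlib

open Metric Set
open scoped RealInnerProductSpace

noncomputable section

/-- The iterates `x₀` and `x_{k+1} = x₀ - (1/L) Σ_{j=0}^{k} H_{k,j} b_j` of the
normalized (epismooth) gradient method. -/
def epiIter {d : ℕ} (H : ℕ → ℕ → ℝ) (L : ℝ) (x₀ : EuclideanSpace ℝ (Fin d))
    (b : ℕ → EuclideanSpace ℝ (Fin d)) : ℕ → EuclideanSpace ℝ (Fin d)
  | 0 => x₀
  | (k + 1) => x₀ - (1 / L) • ∑ j ∈ Finset.range (k + 1), H k j • b j

/-- The attainable-value set of the finite-dimensional epismooth performance estimation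
problem: values `f_N` over all data `(x₀, b_k, f_k)` with `‖b_k‖ ≤ 1`, `‖x₀‖ ≤ R`,
satisfying the smooth-set interpolation inequalities over the index set
`{0, …, N, ⋆}` (star encoded as `none`, with `x⋆ = 0`, `f⋆ = 0`, `b⋆ = 0`, `t⋆ = -1`
and `t_k = -√(1 - ‖b_k‖²)`). -/
def Wset (d N : ℕ) (H : ℕ → ℕ → ℝ) (L R : ℝ) : Set ℝ :=
  {v | ∃ (x₀ : EuclideanSpace ℝ (Fin d)) (b : ℕ → EuclideanSpace ℝ (Fin d)) (fv : ℕ → ℝ),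
    (∀ k ≤ N, ‖b k‖ ≤ 1) ∧ ‖x₀‖ ≤ R ∧ v = fv N ∧
    ∀ k l : Option ℕ, (∀ m ∈ k, m ≤ N) → (∀ m ∈ l, m ≤ N) →
      ⟪k.elim 0 b, l.elim 0 (epiIter H L x₀ b) - (1 / L) • l.elim 0 b
          - k.elim 0 (epiIter H L x₀ b) + (1 / L) • k.elim 0 b⟫
        + (k.elim (-1) fun m => -Real.sqrt (1 - ‖b m‖ ^ 2)) *
          (l.elim 0 fv - (1 / L) * (l.elim (-1) fun m => -Real.sqrt (1 - ‖b m‖ ^ 2))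
            - k.elim 0 fv + (1 / L) * (k.elim (-1) fun m => -Real.sqrt (1 - ‖b m‖ ^ 2)))
        ≤ 0}

lemma Wset_scale (d N : ℕ) (H : ℕ → ℕ → ℝ) (L R η : ℝ) (hη : 0 < η) (v : ℝ)
    (hv : v ∈ Wset d N H L R) : η * v ∈ Wset d N H (L / η) (η * R) := by
  obtain ⟨x₀, b, fv, hb, hx, hvN, hineq⟩ := hv
  refine ⟨η • x₀, b, fun k => η * fv k, hb, ?_, by rw [hvN], ?_⟩
  · rw [norm_smul, Real.norm_eq_abs, abs_of_pos hη]
    exact mul_le_mul_of_nonneg_left hx hη.le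
  · have hdiv : (1 : ℝ) / (L / η) = η * (1 / L) := by
      rw [one_div_div, div_eq_mul_one_div]
    have hiter : ∀ m, epiIter H (L / η) (η • x₀) b m = η • epiIter H L x₀ b m := by
      intro m
      cases m with
      | zero => rfl
      | succ n =>
        show η • x₀ - (1 / (L / η)) • _ = η • (x₀ - (1 / L) • _)
        rw [hdiv, smul_sub, mul_smul]
    have helim : ∀ o : Option ℕ,
        o.elim (0 : EuclideanSpace ℝ (Fin d)) (epiIter H (L / η) (η • x₀) b)
          = η • o.elim 0 (epiIter H L x₀ b) := by
      intro o; cases o with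
      | none => simp
      | some m => exact hiter m
    intro k l hk hl
    have key := hineq k l hk hl
    calc ⟪k.elim 0 b, l.elim 0 (epiIter H (L / η) (η • x₀) b)
            - (1 / (L / η)) • l.elim 0 b
            - k.elim 0 (epiIter H (L / η) (η • x₀) b) + (1 / (L / η)) • k.elim 0 b⟫
          + (k.elim (-1) fun m => -Real.sqrt (1 - ‖b m‖ ^ 2)) *
            (l.elim 0 (fun k => η * fv k)
              - (1 / (L / η)) * (l.elim (-1) fun m => -Real.sqrt (1 - ‖b m‖ ^ 2))
              - k.elim 0 (fun k => η * fv k)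
              + (1 / (L / η)) * (k.elim (-1) fun m => -Real.sqrt (1 - ‖b m‖ ^ 2)))
        = η * (⟪k.elim 0 b, l.elim 0 (epiIter H L x₀ b) - (1 / L) • l.elim 0 b
            - k.elim 0 (epiIter H L x₀ b) + (1 / L) • k.elim 0 b⟫
          + (k.elim (-1) fun m => -Real.sqrt (1 - ‖b m‖ ^ 2)) *
            (l.elim 0 fv - (1 / L) * (l.elim (-1) fun m => -Real.sqrt (1 - ‖b m‖ ^ 2))
              - k.elim 0 fv
              + (1 / L) * (k.elim (-1) fun m => -Real.sqrt (1 - ‖b m‖ ^ 2)))) := by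
          rw [helim, helim, hdiv]
          have hvec : η • l.elim 0 (epiIter H L x₀ b) - (η * (1 / L)) • l.elim 0 b
              - η • k.elim 0 (epiIter H L x₀ b) + (η * (1 / L)) • k.elim 0 b
              = η • (l.elim 0 (epiIter H L x₀ b) - (1 / L) • l.elim 0 b
                - k.elim 0 (epiIter H L x₀ b) + (1 / L) • k.elim 0 b) := by
            rw [mul_smul, mul_smul, smul_add, smul_sub, smul_sub]
          have hsc : l.elim (0 : ℝ) (fun k => η * fv k) = η * l.elim 0 fv := by
            cases l <;> simp
          have hsc' : k.elim (0 : ℝ) (fun k => η * fv k) = η * k.elim 0 fv := by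
            cases k <;> simp
          rw [hvec, real_inner_smul_right, hsc, hsc']
          ring
      _ ≤ 0 := mul_nonpos_of_nonneg_of_nonpos hη.le key

/-- Rescaling property of the epismooth performance estimation value set:
`W(L, ηR) = η · W(ηL, R)`. -/
theorem epismooth_pep_rescaling (d N : ℕ) (hd : 1 ≤ d) (hN : 1 ≤ N) (H : ℕ → ℕ → ℝ)
    (L R : ℝ) (hL : 0 < L) (hR : 0 < R) (η : ℝ) (hη : 0 < η) :
    Wset d N H L (η * R) = (fun t => η * t) '' Wset d N H (η * L) R := by
  ext v
  constructor
  · intro hv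
    refine ⟨η⁻¹ * v, ?_, by field_simp⟩
    have := Wset_scale d N H L (η * R) η⁻¹ (by positivity) v hv
    have h1 : L / η⁻¹ = η * L := by field_simp
    have h2 : η⁻¹ * (η * R) = R := by field_simp
    rwa [h1, h2] at this
  · rintro ⟨t, ht, rfl⟩
    have := Wset_scale d N H (η * L) R η hη t ht
    have h1 : η * L / η = L := by field_simp
    rwa [h1] at this
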